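/- Let $R = k[x,y]$ be a polynomial ring in two variables over a field $k$, and let $J = (x^{a_1}y^{b_1}, \ldots, x^{a_r}y^{b_r})$ with $r > 1$, where $a_1 > a_2 > \cdots > a_r \ge 0$ and $0 \le b_1 < b_2 < \cdots < b_r$. Then $\omega(J) = \max_{1 \le i \le r-1}\{a_i + b_{i+1}\} - 1$. -/

import Mathlib

open Ideal Finset MvPolynomial

/-- `I` is an `N`-absorbing ideal: whenever a product of `N+1` elements lies in `I`,
the product of some `N` of them (omitting one factor) lies in `I`. -/
def IsNAbsorbing {R : Type*} [CommRing R] (I : Ideal R) (N : ℕ) : Prop :=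
  ∀ x : Fin (N + 1) → R, (∏ i, x i) ∈ I →
    ∃ j, (∏ i ∈ Finset.univ.erase j, x i) ∈ I

/-- `ω(I)`: the least `N` such that `I` is `N`-absorbing. -/
noncomputable def omegaAbs {R : Type*} [CommRing R] (I : Ideal R) : ℕ :=
  sInf {N | IsNAbsorbing I N}

namespace OmegaAux

theorem prod_erase_zero' {M : Type*} [CommMonoid M] {n : ℕ} (w : Fin (n + 1) → M) :
    ∏ i ∈ Finset.univ.erase 0, w i = ∏ i : Fin n, w i.succ := by
  classical
  have h := Finset.prod_update_of_mem (Finset.mem_univ (0 : Fin (n + 1))) w 1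
  rw [← Finset.erase_eq, one_mul] at h
  rw [← h, Fin.prod_univ_succ, Function.update_self, one_mul]
  exact Finset.prod_congr rfl fun i _ => by
    rw [Function.update_of_ne (Fin.succ_ne_zero i)]

theorem prod_erase_succ' {M : Type*} [CommMonoid M] {n : ℕ} (w : Fin (n + 1) → M) (j : Fin n) :
    ∏ i ∈ Finset.univ.erase j.succ, w i = w 0 * ∏ i ∈ Finset.univ.erase j, w i.succ := by
  classical
  have h := Finset.prod_update_of_mem (Finset.mem_univ (j.succ)) w 1
  rw [← Finset.erase_eq, one_mul] at h
  have h2 := Finset.prod_update_of_mem (Finset.mem_univ j) (fun i : Fin n => w i.succ) 1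
  rw [← Finset.erase_eq, one_mul] at h2
  rw [← h, Fin.prod_univ_succ, Function.update_of_ne (Fin.succ_ne_zero j).symm]
  congr 1
  rw [← h2]
  exact Finset.prod_congr rfl fun i _ => by
    by_cases hij : i = j
    · subst hij; rw [Function.update_self, Function.update_self]
    · rw [Function.update_of_ne (fun hc => hij (Fin.succ_injective _ hc)),
        Function.update_of_ne hij]

theorem isNAbsorbing_succ {S : Type*} [CommRing S] {I : Ideal S} {n : ℕ}
    (h : IsNAbsorbing I n) : IsNAbsorbing I (n + 1) := by
  intro x hx
  set z : Fin (n + 1) → S := Fin.cons (x 0 * x 1) (fun i : Fin n => x i.succ.succ) with hzdef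
  have hz : ∏ i, z i = ∏ i, x i := by
    rw [Fin.prod_univ_succ z, Fin.prod_univ_succ x, Fin.prod_univ_succ (fun i => x i.succ)]
    simp only [hzdef, Fin.cons_zero, Fin.cons_succ, Fin.succ_zero_eq_one]
    ring
  obtain ⟨j, hj⟩ := h z (by rwa [hz])
  induction j using Fin.cases with
  | zero =>
    rw [prod_erase_zero'] at hj
    refine ⟨0, ?_⟩
    rw [prod_erase_zero', Fin.prod_univ_succ (fun i : Fin (n + 1) => x i.succ)]
    apply Ideal.mul_mem_left
    simpa only [hzdef, Fin.cons_succ] using hj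
  | succ i =>
    rw [prod_erase_succ'] at hj
    refine ⟨i.succ.succ, ?_⟩
    rw [prod_erase_succ' x i.succ, prod_erase_succ' (fun i' : Fin (n + 1) => x i'.succ) i]
    rw [← mul_assoc]
    simpa only [hzdef, Fin.cons_zero, Fin.cons_succ, Fin.succ_zero_eq_one] using hj

theorem isNAbsorbing_mono {S : Type*} [CommRing S] {I : Ideal S} {n m : ℕ} (hnm : n ≤ m)
    (h : IsNAbsorbing I n) : IsNAbsorbing I m := by
  induction m with
  | zero => exact Nat.le_zero.mp hnm ▸ h
  | succ m ih =>
    rcases Nat.lt_or_ge n (m + 1) with hlt | hge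
    · exact isNAbsorbing_succ (ih (by omega))
    · exact (by omega : n = m + 1) ▸ h

theorem counting_aux (M A : ℕ) (c : Fin M → ℕ) (hA : A ≤ ∑ t, c t) :
    (Finset.univ.filter fun j => ¬ A ≤ ∑ t ∈ Finset.univ.erase j, c t).card ≤ A := by
  classical
  set C := ∑ t, c t with hC
  set Xs := Finset.univ.filter fun j => ¬ A ≤ ∑ t ∈ Finset.univ.erase j, c t with hXs
  have hkey : ∀ j ∈ Xs, C + 1 ≤ c j + A := by
    intro j hj
    have hj' := (Finset.mem_filter.mp hj).2
    have hsum : c j + ∑ t ∈ Finset.univ.erase j, c t = C :=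
      Finset.add_sum_erase _ _ (Finset.mem_univ j)
    omega
  by_contra hcard
  push_neg at hcard
  have h1 : Xs.card • (C + 1 - A) ≤ ∑ j ∈ Xs, c j :=
    Finset.card_nsmul_le_sum _ _ _ (fun j hj => by have := hkey j hj; omega)
  have h2 : ∑ j ∈ Xs, c j ≤ C :=
    Finset.sum_le_sum_of_subset (Finset.filter_subset _ _)
  have h3 : Xs.card * (C + 1 - A) ≤ C := by
    rw [smul_eq_mul] at h1; exact h1.trans h2
  have h4 : (A + 1) * (C + 1 - A) ≤ Xs.card * (C + 1 - A) :=
    Nat.mul_le_mul_right _ hcard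
  have h5 : A * 1 ≤ A * (C + 1 - A) := Nat.mul_le_mul_left _ (by omega)
  rw [mul_one] at h5
  rw [add_mul, one_mul] at h4
  generalize A * (C + 1 - A) = E at h4 h5
  omega

theorem counting (M A B : ℕ) (c d : Fin M → ℕ)
    (hA : A ≤ ∑ t, c t) (hB : B ≤ ∑ t, d t) (hM : A + B < M) :
    ∃ j, A ≤ ∑ t ∈ Finset.univ.erase j, c t ∧ B ≤ ∑ t ∈ Finset.univ.erase j, d t := by
  classical
  have hX := counting_aux M A c hA
  have hY := counting_aux M B d hB
  set Xs := Finset.univ.filter fun j => ¬ A ≤ ∑ t ∈ Finset.univ.erase j, c t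
  set Ys := Finset.univ.filter fun j => ¬ B ≤ ∑ t ∈ Finset.univ.erase j, d t
  have hsub : ¬ (Finset.univ : Finset (Fin M)) ⊆ Xs ∪ Ys := by
    intro hs
    have hc1 := Finset.card_le_card hs
    have hu := Finset.card_union_le Xs Ys
    rw [Finset.card_univ, Fintype.card_fin] at hc1
    omega
  obtain ⟨j, -, hj⟩ := Finset.not_subset.mp hsub
  rw [Finset.mem_union] at hj
  push_neg at hj
  refine ⟨j, ?_, ?_⟩
  · by_contra h
    exact hj.1 (Finset.mem_filter.mpr ⟨Finset.mem_univ j, h⟩)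
  · by_contra h
    exact hj.2 (Finset.mem_filter.mpr ⟨Finset.mem_univ j, h⟩)

variable {k : Type*} [Field k]

local notation "R" => MvPolynomial (Fin 2) k

theorem fin2_eq_zero {v : Fin 2 →₀ ℕ} (h0 : v 0 = 0) (h1 : v 1 = 0) : v = 0 := by
  ext i
  fin_cases i <;> simpa

theorem pair_apply0 (p q : ℕ) :
    (Finsupp.single (0 : Fin 2) p + Finsupp.single (1 : Fin 2) q) 0 = p := by
  simp [Finsupp.single_apply]

theorem pair_apply1 (p q : ℕ) :
    (Finsupp.single (0 : Fin 2) p + Finsupp.single (1 : Fin 2) q) 1 = q := by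
  simp [Finsupp.single_apply]

theorem pair_le_iff (p q : ℕ) (s : Fin 2 →₀ ℕ) :
    Finsupp.single (0 : Fin 2) p + Finsupp.single (1 : Fin 2) q ≤ s ↔ p ≤ s 0 ∧ q ≤ s 1 := by
  rw [Finsupp.le_def, Fin.forall_fin_two, pair_apply0, pair_apply1]

theorem Xpow_mul_Xpow (p q : ℕ) :
    (X 0 : R) ^ p * X 1 ^ q
      = monomial (Finsupp.single (0 : Fin 2) p + Finsupp.single (1 : Fin 2) q) 1 := by
  rw [X_pow_eq_monomial, X_pow_eq_monomial, monomial_mul, one_mul]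

theorem coeff_Xpow_mul_Xpow (p q p' q' : ℕ) :
    coeff (Finsupp.single (0 : Fin 2) p' + Finsupp.single (1 : Fin 2) q') ((X 0 : R) ^ p * X 1 ^ q)
      = if p = p' ∧ q = q' then 1 else 0 := by
  rw [Xpow_mul_Xpow, coeff_monomial]
  by_cases h : p = p' ∧ q = q'
  · obtain ⟨rfl, rfl⟩ := h
    simp
  · rw [if_neg h, if_neg]
    intro he
    exact h ⟨by simpa [pair_apply0] using congrArg (fun f => f 0) he,
      by simpa [pair_apply1] using congrArg (fun f => f 1) he⟩

theorem mem_span_monomial_iff {ι : Type*} (σf : ι → (Fin 2 →₀ ℕ)) (f : R) :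
    f ∈ Ideal.span (Set.range fun j => (monomial (σf j) (1 : k))) ↔
      ∀ s ∈ f.support, ∃ j, σf j ≤ s := by
  classical
  constructor
  · intro hf
    let I : Ideal R :=
      { carrier := {g : R | ∀ s ∈ g.support, ∃ j, σf j ≤ s}
        add_mem' := by
          intro g h hg hh s hs
          rcases Finset.mem_union.mp (MvPolynomial.support_add hs) with h' | h'
          exacts [hg s h', hh s h']
        zero_mem' := by intro s hs; simp at hs
        smul_mem' := by
          intro c g hg s hs
          rw [smul_eq_mul] at hs
          obtain ⟨y, hy, z, hz, rfl⟩ := Finset.mem_add.mp (MvPolynomial.support_mul _ _ hs)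
          obtain ⟨j, hj⟩ := hg z hz
          exact ⟨j, hj.trans le_add_self⟩ }
    have hle : Ideal.span (Set.range fun j => (monomial (σf j) (1 : k))) ≤ I := by
      rw [Ideal.span_le]
      rintro _ ⟨j, rfl⟩
      intro s hs
      rw [MvPolynomial.support_monomial, if_neg (one_ne_zero)] at hs
      rw [Finset.mem_singleton] at hs
      exact ⟨j, hs ▸ le_rfl⟩
    exact hle hf
  · intro h
    rw [f.as_sum]
    apply Ideal.sum_mem
    intro s hs
    obtain ⟨j, hj⟩ := h s hs
    have : (monomial s) (coeff s f)
        = (monomial (σf j) (1 : k)) * monomial (s - σf j) (coeff s f) := by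
      rw [monomial_mul, one_mul, add_tsub_cancel_of_le hj]
    rw [this]
    exact Ideal.mul_mem_right _ _ (Ideal.subset_span ⟨j, rfl⟩)

theorem mem_J_iff {m : ℕ} (a b : Fin m → ℕ) (f : R) :
    f ∈ Ideal.span (Set.range fun j => (X 0 : R) ^ a j * X 1 ^ b j) ↔
      ∀ s ∈ f.support, ∃ j, a j ≤ s 0 ∧ b j ≤ s 1 := by
  have h1 : (fun j => (X 0 : R) ^ a j * X 1 ^ b j)
      = fun j => monomial (Finsupp.single (0 : Fin 2) (a j) + Finsupp.single (1 : Fin 2) (b j))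
          (1 : k) :=
    funext fun j => Xpow_mul_Xpow (a j) (b j)
  rw [h1, mem_span_monomial_iff]
  constructor
  · intro h s hs
    obtain ⟨j, hj⟩ := h s hs
    exact ⟨j, (pair_le_iff _ _ _).mp hj⟩
  · intro h s hs
    obtain ⟨j, hj⟩ := h s hs
    exact ⟨j, (pair_le_iff _ _ _).mpr hj⟩

theorem exists_decomp {ι : Type*} (x : ι → R) (T : Finset ι) :
    ∀ s ∈ (∏ t ∈ T, x t).support, ∃ g : ι → (Fin 2 →₀ ℕ),
      (∀ t ∈ T, g t ∈ (x t).support) ∧ s = ∑ t ∈ T, g t := by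
  classical
  induction T using Finset.cons_induction with
  | empty =>
    intro s hs
    rw [Finset.prod_empty] at hs
    have hs0 : s = 0 := by
      rw [MvPolynomial.mem_support_iff, MvPolynomial.coeff_one] at hs
      by_contra h
      exact hs (if_neg (fun h' => h h'.symm))
    exact ⟨fun _ => 0, by simp, by simp [hs0]⟩
  | cons a T haT ih =>
    intro s hs
    rw [Finset.prod_cons] at hs
    obtain ⟨y, hy, z, hz, rfl⟩ := Finset.mem_add.mp (MvPolynomial.support_mul _ _ hs)
    obtain ⟨g, hg, hsum⟩ := ih z hz
    refine ⟨Function.update g a y, ?_, ?_⟩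
    · intro t ht
      rcases Finset.mem_cons.mp ht with rfl | ht
      · simpa using hy
      · rw [Function.update_of_ne (ne_of_mem_of_not_mem ht haT)]
        exact hg t ht
    · rw [Finset.sum_cons, Function.update_self, hsum]
      congr 1
      exact Finset.sum_congr rfl fun t ht => by
        rw [Function.update_of_ne (ne_of_mem_of_not_mem ht haT)]

theorem Xpow_dvd_iff {i : Fin 2} {n : ℕ} {f : R} :
    (X i : R) ^ n ∣ f ↔ ∀ s ∈ f.support, n ≤ s i := by
  classical
  constructor
  · rintro ⟨g, rfl⟩ s hs
    obtain ⟨y, hy, z, hz, rfl⟩ := Finset.mem_add.mp (MvPolynomial.support_mul _ _ hs)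
    rw [X_pow_eq_monomial, MvPolynomial.support_monomial, if_neg one_ne_zero,
      Finset.mem_singleton] at hy
    subst hy
    rw [Finsupp.add_apply, Finsupp.single_eq_same]
    exact Nat.le_add_right _ _
  · intro h
    refine ⟨∑ s ∈ f.support, monomial (s - Finsupp.single i n) (coeff s f), ?_⟩
    rw [Finset.mul_sum]
    conv_lhs => rw [f.as_sum]
    refine Finset.sum_congr rfl fun s hs => ?_
    rw [X_pow_eq_monomial, monomial_mul, one_mul,
      add_tsub_cancel_of_le (Finsupp.single_le_iff.mpr (h s hs))]

noncomputable def elim0 (i : Fin 2) : MvPolynomial (Fin 2) k →ₐ[k] MvPolynomial (Fin 2) k :=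
  aeval (fun j => if j = i then 0 else X j)

theorem X_dvd_sub_elim0 (i : Fin 2) (f : R) : (X i : R) ∣ f - elim0 i f := by
  induction f using MvPolynomial.induction_on with
  | C a => simp [elim0, aeval_C, algebraMap_eq]
  | add p q hp hq =>
    have : p + q - elim0 i (p + q) = (p - elim0 i p) + (q - elim0 i q) := by
      rw [_root_.map_add]; ring
    rw [this]
    exact dvd_add hp hq
  | mul_X p j hp =>
    rw [_root_.map_mul, elim0, aeval_X]
    by_cases hj : j = i
    · subst hj
      rw [if_pos rfl, mul_zero, sub_zero]
      exact dvd_mul_left _ _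
    · rw [if_neg hj]
      have : p * X j - (aeval (fun j' => if j' = i then 0 else X j')) p * X j
          = (p - elim0 i p) * X j := by rw [elim0]; ring
      rw [this]
      exact hp.mul_right _

theorem X_dvd_iff_elim0 {i : Fin 2} {f : R} : (X i : R) ∣ f ↔ elim0 i f = 0 := by
  constructor
  · rintro ⟨g, rfl⟩
    rw [_root_.map_mul, elim0, aeval_X, if_pos rfl, zero_mul]
  · intro h
    have := X_dvd_sub_elim0 i f
    rwa [h, sub_zero] at this

theorem exists_supp_coord {ι : Type*} (i : Fin 2) (x : ι → R) (T : Finset ι) (c : ι → ℕ)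
    (h1 : ∀ t ∈ T, (X i : R) ^ c t ∣ x t) (h2 : ∀ t ∈ T, ¬ (X i : R) ^ (c t + 1) ∣ x t) :
    ∃ s ∈ (∏ t ∈ T, x t).support, s i = ∑ t ∈ T, c t := by
  classical
  have hy : ∀ t ∈ T, ∃ g : R, x t = X i ^ c t * g ∧ ¬ (X i : R) ∣ g := by
    intro t ht
    obtain ⟨g, hg⟩ := h1 t ht
    refine ⟨g, hg, fun hdvd => h2 t ht ?_⟩
    obtain ⟨g', rfl⟩ := hdvd
    exact ⟨g', by rw [hg]; ring⟩
  choose! y hxy hnd using hy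
  have hprod : ∏ t ∈ T, x t = X i ^ (∑ t ∈ T, c t) * ∏ t ∈ T, y t := by
    rw [← Finset.prod_pow_eq_pow_sum, ← Finset.prod_mul_distrib]
    exact Finset.prod_congr rfl hxy
  have hY : ¬ (X i : R) ∣ ∏ t ∈ T, y t := by
    rw [X_dvd_iff_elim0, map_prod]
    intro h0
    obtain ⟨t, ht, h0⟩ := Finset.prod_eq_zero_iff.mp h0
    exact hnd t ht (X_dvd_iff_elim0.mpr h0)
  have hex : ∃ s' ∈ (∏ t ∈ T, y t).support, s' i = 0 := by
    by_contra h
    push_neg at h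
    exact hY (pow_one (X i : R) ▸ Xpow_dvd_iff.mpr fun s hs => by
      have := h s hs; omega)
  obtain ⟨s', hs', hs'i⟩ := hex
  refine ⟨Finsupp.single i (∑ t ∈ T, c t) + s', ?_, by
    rw [Finsupp.add_apply, Finsupp.single_eq_same, hs'i, add_zero]⟩
  rw [hprod, X_pow_eq_monomial, MvPolynomial.mem_support_iff, MvPolynomial.coeff_monomial_mul,
    one_mul]
  exact MvPolynomial.mem_support_iff.mp hs'

theorem cancel_of_constant (P : (Fin 2 →₀ ℕ) → Prop)
    (hup : ∀ u v : Fin 2 →₀ ℕ, u ≤ v → P u → P v)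
    (f g : R) (hg : coeff 0 g ≠ 0)
    (h : ∀ s ∈ (f * g).support, P s) : ∀ s ∈ f.support, P s := by
  classical
  by_contra hc
  push_neg at hc
  obtain ⟨s₁, hs₁, hPs₁⟩ := hc
  have hB : (f.support.filter fun s => ¬ P s).Nonempty :=
    ⟨s₁, Finset.mem_filter.mpr ⟨hs₁, hPs₁⟩⟩
  obtain ⟨s₀, hs₀B, hmin⟩ := Finset.exists_min_image _ (fun s => s 0 + s 1) hB
  obtain ⟨hs₀, hPs₀⟩ := Finset.mem_filter.mp hs₀B
  apply hPs₀
  apply h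
  rw [MvPolynomial.mem_support_iff, MvPolynomial.coeff_mul,
    Finset.sum_eq_single (s₀, (0 : Fin 2 →₀ ℕ))]
  · exact mul_ne_zero (MvPolynomial.mem_support_iff.mp hs₀) hg
  · rintro ⟨u, v⟩ huv hne
    rw [Finset.HasAntidiagonal.mem_antidiagonal] at huv
    by_cases hu : coeff u f = 0
    · simp [hu]
    · exfalso
      have huf : u ∈ f.support := MvPolynomial.mem_support_iff.mpr hu
      have hul : u ≤ s₀ := huv ▸ le_self_add
      have hPu : ¬ P u := fun hPu => hPs₀ (hup u s₀ hul hPu)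
      have huB := hmin u (Finset.mem_filter.mpr ⟨huf, hPu⟩)
      have e0 : u 0 + v 0 = s₀ 0 := by rw [← huv, Finsupp.add_apply]
      have e1 : u 1 + v 1 = s₀ 1 := by rw [← huv, Finsupp.add_apply]
      have hv0 : v 0 = 0 := by omega
      have hv1 : v 1 = 0 := by omega
      have hv : v = 0 := fin2_eq_zero hv0 hv1
      subst hv
      simp only [add_zero] at huv
      exact hne (Prod.ext huv rfl)
  · intro hmem
    exact absurd (Finset.HasAntidiagonal.mem_antidiagonal.mpr (add_zero s₀)) hmem

end OmegaAux

open OmegaAux in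
theorem omega_monomial_ideal_two_vars {k : Type*} [Field k] (r : ℕ)
    (a b : Fin (r + 2) → ℕ) (ha : StrictAnti a) (hb : StrictMono b)
    (J : Ideal (MvPolynomial (Fin 2) k))
    (hJ : J = Ideal.span (Set.range fun i =>
      (X 0 : MvPolynomial (Fin 2) k) ^ a i * (X 1 : MvPolynomial (Fin 2) k) ^ b i)) :
    omegaAbs J = (Finset.univ.sup fun i : Fin (r + 1) => a i.castSucc + b i.succ) - 1 := by
  classical
  have hcrit : ∀ f : MvPolynomial (Fin 2) k,
      f ∈ J ↔ ∀ s ∈ f.support, ∃ j, a j ≤ s 0 ∧ b j ≤ s 1 := by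
    intro f
    rw [hJ]
    exact mem_J_iff a b f
  have hgen : ∀ j : Fin (r + 2),
      (X 0 : MvPolynomial (Fin 2) k) ^ a j * X 1 ^ b j ∈ J := by
    intro j
    rw [hJ]
    exact Ideal.subset_span ⟨j, rfl⟩
  set m := Finset.univ.sup fun i : Fin (r + 1) => a i.castSucc + b i.succ with hm
  have hsup_le : ∀ i : Fin (r + 1), a i.castSucc + b i.succ ≤ m :=
    fun i => Finset.le_sup (f := fun i : Fin (r+1) => a i.castSucc + b i.succ) (Finset.mem_univ i)
  have h01 : (0 : Fin (r + 2)) < 1 := by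
    rw [Fin.lt_iff_val_lt_val]
    simp
  have ha0 : 1 ≤ a 0 := by have := ha h01; omega
  have hb1 : 1 ≤ b 1 := by have := hb h01; omega
  have hm2 : 2 ≤ m := by
    have h := hsup_le 0
    simp only [Fin.castSucc_zero, Fin.succ_zero_eq_one] at h
    omega
  set N := m - 1 with hN
  -- Part 1 : J is N-absorbing
  have habs : IsNAbsorbing J N := by
    intro x hx
    by_cases hzero : ∃ t, x t = 0
    · obtain ⟨t, ht⟩ := hzero
      refine ⟨if t = 0 then Fin.last N else 0, ?_⟩
      have htm : t ∈ Finset.univ.erase (if t = 0 then Fin.last N else 0) := by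
        rw [Finset.mem_erase]
        refine ⟨?_, Finset.mem_univ t⟩
        split_ifs with h0
        · subst h0
          exact Fin.ne_of_val_ne (by simp [Fin.val_last]; omega)
        · exact h0
      rw [Finset.prod_eq_zero htm ht]
      exact J.zero_mem
    push_neg at hzero
    by_cases hconst : ∃ t, coeff 0 (x t) ≠ 0
    · obtain ⟨t, ht⟩ := hconst
      refine ⟨t, ?_⟩
      rw [hcrit]
      refine cancel_of_constant _ ?_ _ (x t) ht ?_
      · intro u v huv hu
        obtain ⟨j, hj0, hj1⟩ := hu
        rw [Finsupp.le_def] at huv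
        exact ⟨j, hj0.trans (huv 0), hj1.trans (huv 1)⟩
      · have hpe : (∏ i ∈ Finset.univ.erase t, x i) * x t = ∏ i, x i := by
          rw [mul_comm]
          exact Finset.mul_prod_erase _ _ (Finset.mem_univ t)
        rw [hpe]
        exact (hcrit _).mp hx
    push_neg at hconst
    have hne : ∀ t, (x t).support.Nonempty := fun t =>
      Finset.nonempty_iff_ne_empty.mpr (fun h => hzero t (MvPolynomial.support_eq_empty.mp h))
    set c : Fin (N + 1) → ℕ := fun t => (x t).support.inf' (hne t) (fun s => s 0) with hcdef
    set d : Fin (N + 1) → ℕ := fun t => (x t).support.inf' (hne t) (fun s => s 1) with hddef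
    have hcle : ∀ t, ∀ s ∈ (x t).support, c t ≤ s 0 := by
      intro t s hs
      rw [hcdef]
      exact Finset.inf'_le _ hs
    have hdle : ∀ t, ∀ s ∈ (x t).support, d t ≤ s 1 := by
      intro t s hs
      rw [hddef]
      exact Finset.inf'_le _ hs
    have hcd : ∀ t, (X 0 : MvPolynomial (Fin 2) k) ^ c t ∣ x t :=
      fun t => Xpow_dvd_iff.mpr (hcle t)
    have hdd : ∀ t, (X 1 : MvPolynomial (Fin 2) k) ^ d t ∣ x t :=
      fun t => Xpow_dvd_iff.mpr (hdle t)
    have hcnd : ∀ t, ¬ (X 0 : MvPolynomial (Fin 2) k) ^ (c t + 1) ∣ x t := by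
      intro t hdvd
      obtain ⟨s, hs, hse⟩ := Finset.exists_mem_eq_inf' (hne t) (fun s : Fin 2 →₀ ℕ => s 0)
      have h2 := Xpow_dvd_iff.mp hdvd s hs
      have hct : c t = s 0 := by rw [hcdef]; exact hse
      omega
    have hdnd : ∀ t, ¬ (X 1 : MvPolynomial (Fin 2) k) ^ (d t + 1) ∣ x t := by
      intro t hdvd
      obtain ⟨s, hs, hse⟩ := Finset.exists_mem_eq_inf' (hne t) (fun s : Fin 2 →₀ ℕ => s 1)
      have h2 := Xpow_dvd_iff.mp hdvd s hs
      have hct : d t = s 1 := by rw [hddef]; exact hse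
      omega
    have hmemJ := (hcrit _).mp hx
    have hClow : a (Fin.last (r + 1)) ≤ ∑ t, c t := by
      obtain ⟨s, hs, hsi⟩ :=
        exists_supp_coord 0 x Finset.univ c (fun t _ => hcd t) (fun t _ => hcnd t)
      obtain ⟨j, hj0, -⟩ := hmemJ s hs
      have := ha.antitone (Fin.le_last j)
      omega
    have hDlow : b 0 ≤ ∑ t, d t := by
      obtain ⟨s, hs, hsi⟩ :=
        exists_supp_coord 1 x Finset.univ d (fun t _ => hdd t) (fun t _ => hdnd t)
      obtain ⟨j, -, hj1⟩ := hmemJ s hs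
      have := hb.monotone (Fin.zero_le j)
      omega
    have hlastlt : a (Fin.last (r + 1)) < a ((Fin.last r).castSucc) :=
      ha (Fin.castSucc_lt_last _)
    have hblt : b 0 < b ((Fin.last r).succ) := hb (Fin.succ_pos _)
    have hsupr := hsup_le (Fin.last r)
    have hMlt : a (Fin.last (r + 1)) + b 0 < N + 1 := by omega
    obtain ⟨j, hjc, hjd⟩ :=
      counting (N + 1) (a (Fin.last (r + 1))) (b 0) c d hClow hDlow hMlt
    refine ⟨j, ?_⟩
    rw [hcrit]
    intro s hs
    obtain ⟨g, hg, rfl⟩ := exists_decomp x (Finset.univ.erase j) s hs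
    have hs0 : a (Fin.last (r + 1)) ≤ (∑ t ∈ Finset.univ.erase j, g t) 0 := by
      rw [Finsupp.finset_sum_apply]
      exact hjc.trans (Finset.sum_le_sum (fun t ht => hcle t _ (hg t ht)))
    have hs1 : b 0 ≤ (∑ t ∈ Finset.univ.erase j, g t) 1 := by
      rw [Finsupp.finset_sum_apply]
      exact hjd.trans (Finset.sum_le_sum (fun t ht => hdle t _ (hg t ht)))
    have hstot : N ≤ (∑ t ∈ Finset.univ.erase j, g t) 0
        + (∑ t ∈ Finset.univ.erase j, g t) 1 := by
      have hone : ∀ t ∈ Finset.univ.erase j, 1 ≤ g t 0 + g t 1 := by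
        intro t ht
        by_contra hle
        push_neg at hle
        have h0 : g t 0 = 0 := by omega
        have h1 : g t 1 = 0 := by omega
        have hgt := hg t ht
        rw [fin2_eq_zero h0 h1, MvPolynomial.mem_support_iff] at hgt
        exact hgt (hconst t)
      have hcard : (Finset.univ.erase j).card = N := by
        rw [Finset.card_erase_of_mem (Finset.mem_univ j), Finset.card_univ, Fintype.card_fin]
        omega
      have hh := Finset.card_nsmul_le_sum (Finset.univ.erase j)
        (fun t => g t 0 + g t 1) 1 hone
      rw [smul_eq_mul, mul_one, hcard] at hh
      rw [Finsupp.finset_sum_apply, Finsupp.finset_sum_apply, ← Finset.sum_add_distrib]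
      exact hh
    set p := (∑ t ∈ Finset.univ.erase j, g t) 0 with hp
    set q := (∑ t ∈ Finset.univ.erase j, g t) 1 with hq
    have hcond : ∀ i : Fin (r + 1), a i.castSucc ≤ p ∨ b i.succ ≤ q := by
      intro i
      by_contra hcc
      push_neg at hcc
      have := hsup_le i
      omega
    have hFne : (Finset.univ.filter (fun j' : Fin (r + 2) => a j' ≤ p)).Nonempty :=
      ⟨Fin.last (r + 1), Finset.mem_filter.mpr ⟨Finset.mem_univ _, hs0⟩⟩
    set j₀ := (Finset.univ.filter (fun j' : Fin (r + 2) => a j' ≤ p)).min' hFne with hj₀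
    have hj₀mem := Finset.min'_mem _ hFne
    have hj₀a : a j₀ ≤ p := (Finset.mem_filter.mp hj₀mem).2
    by_cases hz : j₀ = 0
    · exact ⟨0, hz ▸ hj₀a, hs1⟩
    · obtain ⟨i, hi⟩ := Fin.eq_succ_of_ne_zero hz
      have hnotF : ¬ a i.castSucc ≤ p := by
        intro hle
        have hmem2 : i.castSucc ∈ Finset.univ.filter (fun j' : Fin (r + 2) => a j' ≤ p) :=
          Finset.mem_filter.mpr ⟨Finset.mem_univ _, hle⟩
        have hmm := Finset.min'_le _ _ hmem2
        rw [← hj₀] at hmm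
        have hcs : i.castSucc < i.succ := Fin.castSucc_lt_succ
        rw [← hi] at hcs
        exact absurd hmm (not_le.mpr hcs)
      have hbq : b i.succ ≤ q := (hcond i).resolve_left hnotF
      exact ⟨j₀, hj₀a, hi ▸ hbq⟩
  -- Part 2 : J is not (N-1)-absorbing
  have hnot : ¬ IsNAbsorbing J (N - 1) := by
    obtain ⟨istar, -, histar⟩ := Finset.exists_mem_eq_sup Finset.univ Finset.univ_nonempty
      (fun i : Fin (r + 1) => a i.castSucc + b i.succ)
    rw [← hm] at histar
    set A := a istar.castSucc with hA
    set B := b istar.succ with hB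
    have hA1 : 1 ≤ A := by
      have := ha (Fin.castSucc_lt_last istar)
      omega
    have hB1 : 1 ≤ B := by
      have := hb (Fin.succ_pos istar)
      omega
    have halpha : a istar.succ < A := ha (Fin.castSucc_lt_succ (i := istar))
    have hbeta : b istar.castSucc < B := hb (Fin.castSucc_lt_succ (i := istar))
    intro habsN
    set f : ℕ → MvPolynomial (Fin 2) k := fun n =>
      if n < A - 1 then X 0 else if n < A - 1 + (B - 1) then X 1 else X 0 + X 1 with hf
    have hprod : (∏ i : Fin (N - 1 + 1), f i.val)
        = X 0 ^ (A - 1) * X 1 ^ (B - 1) * (X 0 + X 1) := by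
      rw [Fin.prod_univ_eq_prod_range f (N - 1 + 1)]
      rw [show N - 1 + 1 = (A - 1) + (B - 1) + 1 by omega]
      rw [Finset.prod_range_succ, Finset.prod_range_add]
      have e1 : ∏ n ∈ Finset.range (A - 1), f n = X 0 ^ (A - 1) := by
        rw [Finset.prod_congr rfl (fun n hn => show f n = X 0 from
          if_pos (Finset.mem_range.mp hn)), Finset.prod_const, Finset.card_range]
      have e2 : ∏ n ∈ Finset.range (B - 1), f ((A - 1) + n) = X 1 ^ (B - 1) := by
        rw [Finset.prod_congr rfl (fun n hn => show f ((A - 1) + n) = X 1 by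
          have := Finset.mem_range.mp hn
          exact (if_neg (by omega)).trans (if_pos (by omega))),
          Finset.prod_const, Finset.card_range]
      have e3 : f ((A - 1) + (B - 1)) = X 0 + X 1 :=
        (if_neg (by omega)).trans (if_neg (by omega))
      rw [e1, e2, e3]
    have hPmem : (X 0 : MvPolynomial (Fin 2) k) ^ (A - 1) * X 1 ^ (B - 1) * (X 0 + X 1) ∈ J := by
      have hident : (X 0 : MvPolynomial (Fin 2) k) ^ (A - 1) * X 1 ^ (B - 1) * (X 0 + X 1)
          = X 1 ^ ((B - 1) - b istar.castSucc) * (X 0 ^ A * X 1 ^ (b istar.castSucc))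
            + X 0 ^ ((A - 1) - a istar.succ) * (X 0 ^ (a istar.succ) * X 1 ^ B) := by
        set al := a istar.succ with hal
        set be := b istar.castSucc with hbe
        set pp := (A - 1) - al with hpp
        set qq := (B - 1) - be with hqq
        rw [show A - 1 = al + pp by omega, show B - 1 = be + qq by omega,
          show A = al + pp + 1 by omega, show B = be + qq + 1 by omega]
        ring
      rw [hident]
      exact Ideal.add_mem _ (Ideal.mul_mem_left _ _ (hgen istar.castSucc))
        (Ideal.mul_mem_left _ _ (hgen istar.succ))
    obtain ⟨j, hj⟩ := habsN (fun i : Fin (N - 1 + 1) => f i.val) (by rw [hprod]; exact hPmem)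
    have hQ : f j.val * ∏ i ∈ Finset.univ.erase j, f i.val
        = X 0 ^ (A - 1) * X 1 ^ (B - 1) * (X 0 + X 1) := by
      rw [Finset.mul_prod_erase Finset.univ (fun i : Fin (N - 1 + 1) => f i.val)
        (Finset.mem_univ j)]
      exact hprod
    have hμmem : (Finsupp.single (0 : Fin 2) (A - 1) + Finsupp.single (1 : Fin 2) (B - 1))
        ∈ (∏ i ∈ Finset.univ.erase j, f i.val).support := by
      rw [MvPolynomial.mem_support_iff]
      by_cases hc1 : (j : ℕ) < A - 1
      · have hwj : f j.val = X 0 := if_pos hc1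
        have hA2 : 2 ≤ A := by omega
        have hQ' := hQ
        rw [hwj] at hQ'
        have hQ1 : (X 0 : MvPolynomial (Fin 2) k) * (∏ i ∈ Finset.univ.erase j, f i.val)
            = X 0 * (X 0 ^ (A - 2) * X 1 ^ (B - 1) * (X 0 + X 1)) := by
          rw [hQ', show A - 1 = (A - 2) + 1 by omega]
          ring
        have hQeq := mul_left_cancel₀ (X_ne_zero (0 : Fin 2)) hQ1
        have hexp : (X 0 : MvPolynomial (Fin 2) k) ^ (A - 2) * X 1 ^ (B - 1) * (X 0 + X 1)
            = X 0 ^ ((A - 2) + 1) * X 1 ^ (B - 1) + X 0 ^ (A - 2) * X 1 ^ ((B - 1) + 1) := by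
          ring
        rw [hQeq, hexp, MvPolynomial.coeff_add, coeff_Xpow_mul_Xpow, coeff_Xpow_mul_Xpow,
          if_pos ⟨by omega, rfl⟩, if_neg (by omega)]
        norm_num
      · by_cases hc2 : (j : ℕ) < A - 1 + (B - 1)
        · have hwj : f j.val = X 1 := (if_neg hc1).trans (if_pos hc2)
          have hB2 : 2 ≤ B := by omega
          have hQ' := hQ
          rw [hwj] at hQ'
          have hQ1 : (X 1 : MvPolynomial (Fin 2) k) * (∏ i ∈ Finset.univ.erase j, f i.val)
              = X 1 * (X 0 ^ (A - 1) * X 1 ^ (B - 2) * (X 0 + X 1)) := by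
            rw [hQ', show B - 1 = (B - 2) + 1 by omega]
            ring
          have hQeq := mul_left_cancel₀ (X_ne_zero (1 : Fin 2)) hQ1
          have hexp : (X 0 : MvPolynomial (Fin 2) k) ^ (A - 1) * X 1 ^ (B - 2) * (X 0 + X 1)
              = X 0 ^ ((A - 1) + 1) * X 1 ^ (B - 2) + X 0 ^ (A - 1) * X 1 ^ ((B - 2) + 1) := by
            ring
          rw [hQeq, hexp, MvPolynomial.coeff_add, coeff_Xpow_mul_Xpow, coeff_Xpow_mul_Xpow,
            if_neg (by omega), if_pos ⟨rfl, by omega⟩]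
          norm_num
        · have hwj : f j.val = X 0 + X 1 := (if_neg hc1).trans (if_neg hc2)
          have hX01 : (X 0 : MvPolynomial (Fin 2) k) + X 1 ≠ 0 := by
            intro h0
            have he : (X 0 : MvPolynomial (Fin 2) k) + X 1
                = X 0 ^ 1 * X 1 ^ 0 + X 0 ^ 0 * X 1 ^ 1 := by ring
            rw [he] at h0
            have h0' := congrArg
              (coeff (Finsupp.single (0 : Fin 2) 1 + Finsupp.single (1 : Fin 2) 0)) h0
            rw [MvPolynomial.coeff_add, coeff_Xpow_mul_Xpow, coeff_Xpow_mul_Xpow,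
              MvPolynomial.coeff_zero, if_pos ⟨rfl, rfl⟩, if_neg (by omega)] at h0'
            norm_num at h0'
          have hQ' := hQ
          rw [hwj] at hQ'
          have hQ1 : ((X 0 : MvPolynomial (Fin 2) k) + X 1)
              * (∏ i ∈ Finset.univ.erase j, f i.val)
              = (X 0 + X 1) * (X 0 ^ (A - 1) * X 1 ^ (B - 1)) := by
            rw [hQ']
            ring
          have hQeq := mul_left_cancel₀ hX01 hQ1
          rw [hQeq, coeff_Xpow_mul_Xpow, if_pos ⟨rfl, rfl⟩]
          norm_num
    obtain ⟨j', hj'a, hj'b⟩ := (hcrit _).mp hj _ hμmem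
    rw [pair_apply0] at hj'a
    rw [pair_apply1] at hj'b
    have h1 : istar.castSucc < j' := by
      have hlt : a j' < a istar.castSucc := by omega
      exact ha.lt_iff_gt.mp hlt
    have h2 : j' < istar.succ := by
      have hlt : b j' < b istar.succ := by omega
      exact hb.lt_iff_lt.mp hlt
    rw [Fin.lt_iff_val_lt_val] at h1 h2
    rw [Fin.coe_castSucc] at h1
    rw [Fin.val_succ] at h2
    omega
  -- conclusion
  have hmemN : N ∈ {n : ℕ | IsNAbsorbing J n} := habs
  show sInf {n | IsNAbsorbing J n} = N
  apply le_antisymm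
  · exact Nat.sInf_le hmemN
  · refine le_csInf ⟨N, hmemN⟩ ?_
    intro n hn
    by_contra hlt
    push_neg at hlt
    exact hnot (isNAbsorbing_mono (show n ≤ N - 1 by omega) hn)
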